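/- Let k, ℓ be positive integers with n = k + ℓ. Let M, B, N and M', B', N' be positive real numbers with MN/B² = M'N'/B'², and let A and A' be the n×n MBN matrices determined by (k, ℓ, M, B, N) and (k, ℓ, M', B', N') respectively. If X, Y, X', Y' are positive diagonal n×n matrices such that XAY and X'A'Y' are doubly stochastic, then XAY = X'A'Y'. (That is, the Sinkhorn limit of an MBN matrix depends only on the ratio MN/B².) -/
import Mathlib


open Matrix BigOperators

/-- An `n × n` real matrix is doubly stochastic if all entries are nonnegative and
all row sums and column sums equal `1`. -/
def IsDoublyStochastic {n : ℕ} (S : Matrix (Fin n) (Fin n) ℝ) : Prop :=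
  (∀ i j, 0 ≤ S i j) ∧ (∀ i, ∑ j, S i j = 1) ∧ (∀ j, ∑ i, S i j = 1)

/-- The `MBN` matrix: the symmetric `(k+l) × (k+l)` matrix with value `M` on the upper-left
`k × k` block, `N` on the lower-right `l × l` block, and `B` elsewhere. -/
def MBNMatrix (k l : ℕ) (M B N : ℝ) : Matrix (Fin (k + l)) (Fin (k + l)) ℝ :=
  fun i j =>
    if (i : ℕ) < k then (if (j : ℕ) < k then M else B)
    else (if (j : ℕ) < k then B else N)

lemma MBN_sum_ite (k l : ℕ) (a b : ℝ) :
    ∑ j : Fin (k + l), (if (j : ℕ) < k then a else b) = (k : ℝ) * a + (l : ℝ) * b := by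
  rw [Fin.sum_univ_eq_sum_range (fun m => if m < k then a else b), Finset.sum_ite]
  have h1 : (Finset.range (k + l)).filter (fun j => j < k) = Finset.range k := by
    ext j; simp; omega
  have h2 : (Finset.range (k + l)).filter (fun j => ¬ j < k) = Finset.Ico k (k + l) := by
    ext j; simp; omega
  rw [h1, h2, Finset.sum_const, Finset.sum_const, Finset.card_range, Nat.card_Ico]
  have h3 : k + l - k = l := by omega
  rw [h3]
  simp [nsmul_eq_mul]

set_option maxHeartbeats 1000000 in
lemma MBN_block (k l : ℕ) (hk : 0 < k) (hl : 0 < l) (M B N : ℝ)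
    (hM : 0 < M) (hB : 0 < B) (hN : 0 < N)
    (x y : Fin (k + l) → ℝ) (hx : ∀ i, 0 < x i) (hy : ∀ j, 0 < y j)
    (hS : IsDoublyStochastic (Matrix.diagonal x * MBNMatrix k l M B N * Matrix.diagonal y)) :
    ∃ s t v : ℝ, 0 < s ∧ 0 < t ∧ 0 < v ∧
      (k : ℝ) * s + (l : ℝ) * t = 1 ∧ (k : ℝ) * t + (l : ℝ) * v = 1 ∧
      s * v * B ^ 2 = M * N * t ^ 2 ∧
      ∀ i j, (Matrix.diagonal x * MBNMatrix k l M B N * Matrix.diagonal y) i j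
        = if (i : ℕ) < k then (if (j : ℕ) < k then s else t)
          else (if (j : ℕ) < k then t else v) := by
  haveI : NeZero (k + l) := ⟨by omega⟩
  set A := MBNMatrix k l M B N with hA
  set S := Matrix.diagonal x * A * Matrix.diagonal y with hSdef
  have hApos : ∀ i j, 0 < A i j := by
    intro i j
    simp only [hA, MBNMatrix]
    split_ifs <;> assumption
  have hent : ∀ i j, S i j = x i * (A i j * y j) := by
    intro i j
    rw [hSdef, Matrix.mul_diagonal, Matrix.diagonal_mul, mul_assoc]
  -- row constancy
  have rowconst : ∀ i i' : Fin (k + l), (∀ j, A i j = A i' j) → x i = x i' := by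
    intro i i' hAe
    have hC : 0 < ∑ j, A i' j * y j :=
      Finset.sum_pos (fun j _ => mul_pos (hApos i' j) (hy j)) Finset.univ_nonempty
    have e1 : x i * (∑ j, A i' j * y j) = 1 := by
      have := hS.2.1 i
      rw [← this, Finset.mul_sum]
      exact (Finset.sum_congr rfl fun j _ => by rw [hent, hAe j]).symm
    have e2 : x i' * (∑ j, A i' j * y j) = 1 := by
      have := hS.2.1 i'
      rw [← this, Finset.mul_sum]
      exact (Finset.sum_congr rfl fun j _ => by rw [hent]).symm
    exact mul_right_cancel₀ (ne_of_gt hC) (e1.trans e2.symm)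
  have colconst : ∀ j j' : Fin (k + l), (∀ i, A i j = A i j') → y j = y j' := by
    intro j j' hAe
    have hC : 0 < ∑ i, x i * A i j' :=
      Finset.sum_pos (fun i _ => mul_pos (hx i) (hApos i j')) Finset.univ_nonempty
    have e1 : (∑ i, x i * A i j') * y j = 1 := by
      have := hS.2.2 j
      rw [← this, Finset.sum_mul]
      exact (Finset.sum_congr rfl fun i _ => by rw [hent, hAe i]; ring).symm
    have e2 : (∑ i, x i * A i j') * y j' = 1 := by
      have := hS.2.2 j'
      rw [← this, Finset.sum_mul]
      exact (Finset.sum_congr rfl fun i _ => by rw [hent]; ring).symm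
    exact mul_left_cancel₀ (ne_of_gt hC) (e1.trans e2.symm)
  obtain ⟨j₁, hi₁⟩ : ∃ j : Fin (k + l), (j : ℕ) < k := ⟨⟨0, by omega⟩, hk⟩
  obtain ⟨j₂, hi₂⟩ : ∃ j : Fin (k + l), ¬ (j : ℕ) < k := ⟨⟨k, by omega⟩, by simp⟩
  have hx1 : ∀ i : Fin (k + l), (i : ℕ) < k → x i = x j₁ := by
    intro i hi
    refine rowconst i j₁ fun j => ?_
    simp only [hA, MBNMatrix, if_pos hi, if_pos hi₁]
  have hx2 : ∀ i : Fin (k + l), ¬ (i : ℕ) < k → x i = x j₂ := by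
    intro i hi
    refine rowconst i j₂ fun j => ?_
    simp only [hA, MBNMatrix, if_neg hi, if_neg hi₂]
  have hy1 : ∀ j : Fin (k + l), (j : ℕ) < k → y j = y j₁ := by
    intro j hj
    refine colconst j j₁ fun i => ?_
    simp only [hA, MBNMatrix, if_pos hj, if_pos hi₁]
  have hy2 : ∀ j : Fin (k + l), ¬ (j : ℕ) < k → y j = y j₂ := by
    intro j hj
    refine colconst j j₂ fun i => ?_
    simp only [hA, MBNMatrix, if_neg hj, if_neg hi₂]
  set s : ℝ := x j₁ * (M * y j₁) with hs_def
  set t : ℝ := x j₁ * (B * y j₂) with ht_def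
  set u : ℝ := x j₂ * (B * y j₁) with hu_def
  set v : ℝ := x j₂ * (N * y j₂) with hv_def
  have hform : ∀ i j, S i j = if (i : ℕ) < k then (if (j : ℕ) < k then s else t)
      else (if (j : ℕ) < k then u else v) := by
    intro i j
    rw [hent]
    by_cases hi : (i : ℕ) < k <;> by_cases hj : (j : ℕ) < k <;>
      simp only [hA, MBNMatrix, hi, hj, if_pos, if_neg, if_true, if_false]
    · rw [hx1 i hi, hy1 j hj]
    · rw [hx1 i hi, hy2 j hj]
    · rw [hx2 i hi, hy1 j hj]
    · rw [hx2 i hi, hy2 j hj]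
  have hrow : ∀ i : Fin (k + l), (i : ℕ) < k → (k : ℝ) * s + (l : ℝ) * t = 1 := by
    intro i hi
    have h := hS.2.1 i
    rw [Finset.sum_congr rfl (fun j _ => by rw [hform i j, if_pos hi])] at h
    rw [MBN_sum_ite] at h
    exact h
  have hrow2 : (k : ℝ) * u + (l : ℝ) * v = 1 := by
    have h := hS.2.1 j₂
    rw [Finset.sum_congr rfl (fun j _ => by rw [hform j₂ j, if_neg hi₂])] at h
    rw [MBN_sum_ite] at h
    exact h
  have hcol : (k : ℝ) * s + (l : ℝ) * u = 1 := by
    have h := hS.2.2 j₁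
    have e : ∀ i : Fin (k + l), S i j₁ = if (i : ℕ) < k then s else u := by
      intro i
      rw [hform i j₁]
      by_cases hik : (i : ℕ) < k
      · rw [if_pos hik, if_pos hik, if_pos hi₁]
      · rw [if_neg hik, if_neg hik, if_pos hi₁]
    rw [Finset.sum_congr rfl (fun i _ => e i), MBN_sum_ite] at h
    exact h
  have hrow1 : (k : ℝ) * s + (l : ℝ) * t = 1 := hrow j₁ hi₁
  have hlpos : (0 : ℝ) < l := by exact_mod_cast hl
  have hut : u = t := by
    have : (l : ℝ) * u = (l : ℝ) * t := by linarith
    exact mul_left_cancel₀ (ne_of_gt hlpos) this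
  refine ⟨s, t, v, ?_, ?_, ?_, hrow1, ?_, ?_, ?_⟩
  · exact mul_pos (hx j₁) (mul_pos hM (hy j₁))
  · exact mul_pos (hx j₁) (mul_pos hB (hy j₂))
  · exact mul_pos (hx j₂) (mul_pos hN (hy j₂))
  · rw [← hut]; exact hrow2
  · have : s * v * B ^ 2 = M * N * (t * u) := by
      rw [hs_def, ht_def, hu_def, hv_def]; ring
    rw [this, hut]; ring
  · intro i j
    rw [hform i j, hut]

/-- The Sinkhorn limit of an `MBN` matrix depends only on the ratio `MN/B²`. -/
theorem sinkhorn_MBN_ratio (k l : ℕ) (hk : 0 < k) (hl : 0 < l)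
    (M B N M' B' N' : ℝ)
    (hM : 0 < M) (hB : 0 < B) (hN : 0 < N)
    (hM' : 0 < M') (hB' : 0 < B') (hN' : 0 < N')
    (hratio : M * N / B ^ 2 = M' * N' / B' ^ 2)
    (x y x' y' : Fin (k + l) → ℝ)
    (hx : ∀ i, 0 < x i) (hy : ∀ j, 0 < y j)
    (hx' : ∀ i, 0 < x' i) (hy' : ∀ j, 0 < y' j)
    (hS : IsDoublyStochastic
      (Matrix.diagonal x * MBNMatrix k l M B N * Matrix.diagonal y))
    (hS' : IsDoublyStochastic
      (Matrix.diagonal x' * MBNMatrix k l M' B' N' * Matrix.diagonal y')) :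
    Matrix.diagonal x * MBNMatrix k l M B N * Matrix.diagonal y
      = Matrix.diagonal x' * MBNMatrix k l M' B' N' * Matrix.diagonal y' := by
  obtain ⟨s, t, v, hs, ht, hv, h1, h2, h3, hf⟩ :=
    MBN_block k l hk hl M B N hM hB hN x y hx hy hS
  obtain ⟨s', t', v', hs', ht', hv', h1', h2', h3', hf'⟩ :=
    MBN_block k l hk hl M' B' N' hM' hB' hN' x' y' hx' hy' hS'
  obtain ⟨r, hr_def⟩ : ∃ r : ℝ, r = M * N / B ^ 2 := ⟨_, rfl⟩
  have hr : 0 < r := by rw [hr_def]; positivity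
  have hB2 : (B : ℝ) ^ 2 ≠ 0 := by positivity
  have hB'2 : (B' : ℝ) ^ 2 ≠ 0 := by positivity
  have hsv : s * v = r * t ^ 2 := by
    rw [hr_def]
    field_simp
    linear_combination h3
  have hsv' : s' * v' = r * t' ^ 2 := by
    rw [hr_def, hratio]
    field_simp
    linear_combination h3'
  have hK : (0 : ℝ) < k := by exact_mod_cast hk
  have hL : (0 : ℝ) < l := by exact_mod_cast hl
  -- quadratic equations
  have e1 : (1 - (l : ℝ) * t) * (1 - (k : ℝ) * t) = (k : ℝ) * l * r * t ^ 2 := by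
    have hks : (k : ℝ) * s = 1 - (l : ℝ) * t := by linarith
    have hlv : (l : ℝ) * v = 1 - (k : ℝ) * t := by linarith
    rw [← hks, ← hlv]
    have : ((k : ℝ) * s) * ((l : ℝ) * v) = (k : ℝ) * l * (s * v) := by ring
    rw [this, hsv]; ring
  have e2 : (1 - (l : ℝ) * t') * (1 - (k : ℝ) * t') = (k : ℝ) * l * r * t' ^ 2 := by
    have hks : (k : ℝ) * s' = 1 - (l : ℝ) * t' := by linarith
    have hlv : (l : ℝ) * v' = 1 - (k : ℝ) * t' := by linarith
    rw [← hks, ← hlv]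
    have : ((k : ℝ) * s') * ((l : ℝ) * v') = (k : ℝ) * l * (s' * v') := by ring
    rw [this, hsv']; ring
  have htt : t = t' := by
    by_contra hte
    have key : ((1 : ℝ) - r) * ((k : ℝ) * l) * (t + t') * (t - t')
        = ((k : ℝ) + l) * (t - t') := by
      linear_combination e1 - e2
    have hc : ((1 : ℝ) - r) * ((k : ℝ) * l) * (t + t') = (k : ℝ) + l :=
      mul_right_cancel₀ (sub_ne_zero.mpr hte) key
    have hlt1 : (l : ℝ) * t < 1 := by linarith [mul_pos hK hs]
    have hkt' : (k : ℝ) * t' < 1 := by linarith [mul_pos hL hv']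
    have p1 : (k : ℝ) * ((l : ℝ) * t) < (k : ℝ) * 1 := mul_lt_mul_of_pos_left hlt1 hK
    have p2 : (l : ℝ) * ((k : ℝ) * t') < (l : ℝ) * 1 := mul_lt_mul_of_pos_left hkt' hL
    have psum : (k : ℝ) * l * (t + t') < (k : ℝ) + l := by linarith
    have hpos : 0 < r * ((k : ℝ) * l * (t + t')) :=
      mul_pos hr (mul_pos (mul_pos hK hL) (add_pos ht ht'))
    have heq : ((1 : ℝ) - r) * ((k : ℝ) * l) * (t + t')
        = (k : ℝ) * l * (t + t') - r * ((k : ℝ) * l * (t + t')) := by ring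
    linarith
  subst htt
  have hss : s = s' := by
    have : (k : ℝ) * s = (k : ℝ) * s' := by linarith
    exact mul_left_cancel₀ (ne_of_gt hK) this
  have hvv : v = v' := by
    have : (l : ℝ) * v = (l : ℝ) * v' := by linarith
    exact mul_left_cancel₀ (ne_of_gt hL) this
  subst hss
  subst hvv
  ext i j
  rw [hf i j, hf' i j]
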